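/- In a market (M_b, ∼) of deterministic cash flows, no-arbitrage (NA) holds if and only if the Law of One Price holds, i.e. if and only if every γ ∈ M_b has exactly one spot price. Consequently, in an arbitrage-free market there exists a uniquely determined functional π : M_b → ℝ such that γ ∼ π(γ)·δ0 for all γ ∈ M_b. -/

import Mathlib

open MeasureTheory
open scoped NNReal

/-- The unit zero-coupon bond with maturity `t`: the Dirac measure at `t`,
as a finite signed Borel measure on `[0,∞)` (modeled as `ℝ≥0`). -/
noncomputable def uzcb (t : ℝ≥0) : SignedMeasure ℝ≥0 :=
  (MeasureTheory.Measure.dirac t).toSignedMeasure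

/-- A market of deterministic cash flows: a reflexive, symmetric, additive relation on the
finite signed Borel measures on `[0,∞)` such that every nonzero nonnegative cash flow has at
least one strictly positive spot price. -/
def IsMarket (r : SignedMeasure ℝ≥0 → SignedMeasure ℝ≥0 → Prop) : Prop :=
  (∀ γ, r γ γ) ∧
  (∀ γ₁ γ₂, r γ₁ γ₂ → r γ₂ γ₁) ∧
  (∀ γ₁ γ₂ γ₃ γ₄, r γ₁ γ₂ → r γ₃ γ₄ → r (γ₁ + γ₃) (γ₂ + γ₄)) ∧
  (∀ γ : SignedMeasure ℝ≥0, 0 ≤ γ → γ ≠ 0 → ∃ b : ℝ, 0 < b ∧ r γ (b • uzcb 0))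

/-- No-arbitrage: no nonzero nonnegative cash flow is exchangeable for the null cash flow. -/
def NoArb (r : SignedMeasure ℝ≥0 → SignedMeasure ℝ≥0 → Prop) : Prop :=
  ¬ ∃ γ : SignedMeasure ℝ≥0, 0 ≤ γ ∧ γ ≠ 0 ∧ r 0 γ

lemma uzcb_zero_nonneg : (0 : SignedMeasure ℝ≥0) ≤ uzcb 0 := by
  rw [MeasureTheory.VectorMeasure.le_iff]
  intro i hi
  rw [uzcb, Measure.toSignedMeasure_apply_measurable hi]
  exact ENNReal.toReal_nonneg

lemma smul_uzcb_nonneg {a : ℝ} (ha : 0 ≤ a) : (0 : SignedMeasure ℝ≥0) ≤ a • uzcb 0 := by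
  rw [MeasureTheory.VectorMeasure.le_iff]
  intro i hi
  rw [MeasureTheory.VectorMeasure.smul_apply]
  have h0 := (MeasureTheory.VectorMeasure.le_iff.mp uzcb_zero_nonneg) i hi
  simp only [MeasureTheory.VectorMeasure.zero_apply] at h0 ⊢
  exact smul_nonneg ha h0

lemma smul_uzcb_ne_zero {a : ℝ} (ha : a ≠ 0) : a • uzcb 0 ≠ 0 := by
  intro h
  have := congrArg (fun v : SignedMeasure ℝ≥0 => v Set.univ) h
  simp only [MeasureTheory.VectorMeasure.smul_apply,
    MeasureTheory.VectorMeasure.zero_apply] at this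
  rw [uzcb, Measure.toSignedMeasure_apply_measurable MeasurableSet.univ] at this
  simp [ha] at this

section helpers

variable {r : SignedMeasure ℝ≥0 → SignedMeasure ℝ≥0 → Prop} (hM : IsMarket r)

include hM

lemma market_transfer {x y x' y' c : SignedMeasure ℝ≥0} (h : r x y)
    (hx : x' = x + c) (hy : y' = y + c) : r x' y' := by
  have := hM.2.2.1 _ _ _ _ h (hM.1 c)
  rw [← hx, ← hy] at this
  exact this

/-- Every finite nonnegative measure has a spot price. -/
lemma spot_of_measure (μ : Measure ℝ≥0) [IsFiniteMeasure μ] :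
    ∃ b : ℝ, r μ.toSignedMeasure (b • uzcb 0) := by
  by_cases hμ : μ = 0
  · refine ⟨0, ?_⟩
    have h0 : μ.toSignedMeasure = 0 :=
      (Measure.toSignedMeasure_congr hμ).trans Measure.toSignedMeasure_zero
    rw [zero_smul, h0]
    exact hM.1 0
  · have hnn : (0 : SignedMeasure ℝ≥0) ≤ μ.toSignedMeasure := by
      rw [MeasureTheory.VectorMeasure.le_iff]
      intro i hi
      rw [Measure.toSignedMeasure_apply_measurable hi]
      exact ENNReal.toReal_nonneg
    have hne : μ.toSignedMeasure ≠ 0 := by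
      intro h
      rw [← Measure.toSignedMeasure_zero, Measure.toSignedMeasure_eq_toSignedMeasure_iff] at h
      exact hμ h
    obtain ⟨b, -, hb⟩ := hM.2.2.2 _ hnn hne
    exact ⟨b, hb⟩

/-- Every cash flow has some spot price. -/
lemma spot_exists (γ : SignedMeasure ℝ≥0) : ∃ b : ℝ, r γ (b • uzcb 0) := by
  obtain ⟨bp, hbp⟩ := spot_of_measure hM γ.toJordanDecomposition.posPart
  obtain ⟨bn, hbn⟩ := spot_of_measure hM γ.toJordanDecomposition.negPart
  have key : γ.toJordanDecomposition.posPart.toSignedMeasure -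
      γ.toJordanDecomposition.negPart.toSignedMeasure = γ :=
    γ.toSignedMeasure_toJordanDecomposition
  refine ⟨bp - bn, ?_⟩
  have h1 := hM.2.2.1 _ _ _ _ hbp (hM.2.1 _ _ hbn)
  refine market_transfer hM h1
    (c := -(γ.toJordanDecomposition.negPart.toSignedMeasure) - bn • uzcb 0) ?_ ?_
  · conv_lhs => rw [← key]
    abel
  · rw [show (bp - bn) • uzcb 0 = bp • uzcb 0 - bn • uzcb 0 from sub_smul bp bn (uzcb 0)]; abel

lemma zero_spot_zero (hNA : NoArb r) {a : ℝ} (h : r 0 (a • uzcb 0)) : a = 0 := by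
  by_contra ha
  rcases lt_or_gt_of_ne ha with hlt | hgt
  · have h2 : r (a • uzcb 0) 0 := hM.2.1 _ _ h
    have h3 : r 0 ((-a) • uzcb 0) :=
      market_transfer hM h2 (c := -(a • uzcb 0)) (by abel) (by rw [show (-a) • uzcb 0 = -(a • uzcb 0) from neg_smul a (uzcb 0)]; abel)
    exact hNA ⟨(-a) • uzcb 0, smul_uzcb_nonneg (by linarith),
      smul_uzcb_ne_zero (by linarith), h3⟩
  · exact hNA ⟨a • uzcb 0, smul_uzcb_nonneg (le_of_lt hgt),
      smul_uzcb_ne_zero (ne_of_gt hgt), h⟩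

lemma spot_unique (hNA : NoArb r) {γ : SignedMeasure ℝ≥0} {b c : ℝ}
    (hb : r γ (b • uzcb 0)) (hc : r γ (c • uzcb 0)) : b = c := by
  have h1 := hM.2.2.1 _ _ _ _ (hM.2.1 _ _ hb) hc
  have h2 : r 0 ((c - b) • uzcb 0) := by
    refine market_transfer hM h1 (c := -γ - b • uzcb 0) ?_ ?_
    · abel
    · rw [show (c - b) • uzcb 0 = c • uzcb 0 - b • uzcb 0 from sub_smul c b (uzcb 0)]; abel
  have := zero_spot_zero hM hNA h2
  linarith

end helpers

/-- NA holds iff the Law of One Price holds (every cash flow has exactly one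
spot price); consequently, under NA there is a uniquely determined price functional π
with γ ∼ π(γ)·δ₀ for all γ. -/
theorem NA_iff_LOP (r : SignedMeasure ℝ≥0 → SignedMeasure ℝ≥0 → Prop)
    (hM : IsMarket r) :
    (NoArb r ↔ ∀ γ : SignedMeasure ℝ≥0, ∃! b : ℝ, r γ (b • uzcb 0)) ∧
    (NoArb r → ∃! π : SignedMeasure ℝ≥0 → ℝ,
      ∀ γ : SignedMeasure ℝ≥0, r γ (π γ • uzcb 0)) := by
  have hiff : NoArb r ↔ ∀ γ : SignedMeasure ℝ≥0, ∃! b : ℝ, r γ (b • uzcb 0) := by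
    constructor
    · intro hNA γ
      obtain ⟨b, hb⟩ := spot_exists hM γ
      exact ⟨b, hb, fun c hc => (spot_unique hM hNA hb hc).symm⟩
    · intro hLOP
      rintro ⟨γ, hγnn, hγne, hγ⟩
      obtain ⟨b, hbpos, hb⟩ := hM.2.2.2 γ hγnn hγne
      have h1 : r (0 + γ) (γ + b • uzcb 0) := hM.2.2.1 _ _ _ _ hγ hb
      have h2 : r 0 (b • uzcb 0) :=
        market_transfer hM h1 (c := -γ) (by abel) (by abel)
      have h0 : r 0 ((0 : ℝ) • uzcb 0) := by rw [zero_smul]; exact hM.1 0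
      obtain ⟨c, -, hcuniq⟩ := hLOP 0
      have := (hcuniq _ h2).trans (hcuniq _ h0).symm
      exact absurd this (ne_of_gt hbpos)
  refine ⟨hiff, fun hNA => ?_⟩
  have hLOP := hiff.mp hNA
  refine ⟨fun γ => (hLOP γ).choose, fun γ => (hLOP γ).choose_spec.1, ?_⟩
  intro π' hπ'
  funext γ
  exact (hLOP γ).choose_spec.2 _ (hπ' γ)
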